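/- If the kneading sequence γ of f (the itinerary of f(x_c) over the alphabet {I₀, C, I₁}) is periodic with period k, then the Min-Max sequence ω of f is periodic with period k or 2k. In particular, if ω_{k+1} = M⁺ then ω has period k, and otherwise ω_{2k+1} = M⁺ and ω has period 2k. -/

import Mathlib

open Set Topology Filter Function

namespace MinMaxAux

def SP (f : ℝ → ℝ) (c : ℝ) (n : ℕ) : Prop := ∀ᶠ x in 𝓝[≠] c, f^[n] x < f^[n] c
def SQ (f : ℝ → ℝ) (c : ℝ) (n : ℕ) : Prop := ∀ᶠ x in 𝓝[≠] c, f^[n] c < f^[n] x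

variable {a b x_c : ℝ} {f : ℝ → ℝ}

lemma not_SP_and_SQ {c : ℝ} {n : ℕ} : ¬ (SP f c n ∧ SQ f c n) := by
  rintro ⟨h1, h2⟩
  obtain ⟨x, hx1, hx2⟩ := (h1.and h2).exists
  exact absurd hx1 (not_lt.2 hx2.le)

lemma sign_trichotomy {u v : ℝ} (h : Real.sign u = Real.sign v) :
    (u < 0 ↔ v < 0) ∧ (u = 0 ↔ v = 0) ∧ (0 < u ↔ 0 < v) := by
  have key : ∀ w : ℝ, (w < 0 ∧ Real.sign w = -1) ∨ (w = 0 ∧ Real.sign w = 0) ∨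
      (0 < w ∧ Real.sign w = 1) := by
    intro w
    rcases lt_trichotomy w 0 with h | h | h
    · exact .inl ⟨h, Real.sign_of_neg h⟩
    · exact .inr (.inl ⟨h, by rw [h, Real.sign_zero]⟩)
    · exact .inr (.inr ⟨h, Real.sign_of_pos h⟩)
  rcases key u with ⟨hu, su⟩ | ⟨hu, su⟩ | ⟨hu, su⟩ <;>
    rcases key v with ⟨hv, sv⟩ | ⟨hv, sv⟩ | ⟨hv, sv⟩ <;>
    rw [su, sv] at h <;>
    refine ⟨?_, ?_, ?_⟩ <;> constructor <;> intro h' <;> linarith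

section core

variable (hxc : x_c ∈ Ioo a b) (hmono : StrictMonoOn f (Icc a x_c))
  (hanti : StrictAntiOn f (Icc x_c b)) (hmap : MapsTo f (Icc a b) (Icc a b))
  (hcont : Continuous f)

include hxc hmono hanti hmap hcont

lemma mem_nb : ∀ᶠ x in 𝓝[≠] x_c, x ∈ Icc a b := by
  have h0 : ∀ᶠ x in 𝓝 x_c, x ∈ Icc a b := Icc_mem_nhds hxc.1 hxc.2
  exact h0.filter_mono nhdsWithin_le_nhds

lemma base : SP f x_c 1 := by
  filter_upwards [mem_nb hxc hmono hanti hmap hcont, self_mem_nhdsWithin] with x hx hne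
  simp only [iterate_one]
  rcases lt_or_gt_of_ne (hne : x ≠ x_c) with h | h
  · exact hmono ⟨hx.1, h.le⟩ ⟨hxc.1.le, le_rfl⟩ h
  · exact hanti ⟨le_rfl, hxc.2.le⟩ ⟨h.le, hx.2⟩ h

lemma step_lt {n : ℕ} (h : f^[n] x_c < x_c) :
    (SP f x_c n → SP f x_c (n+1)) ∧ (SQ f x_c n → SQ f x_c (n+1)) := by
  have hIcc : f^[n] x_c ∈ Icc a b := hmap.iterate n (Ioo_subset_Icc_self hxc)
  have hev : ∀ᶠ x in 𝓝[≠] x_c, f^[n] x < x_c :=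
    (((hcont.iterate n).continuousAt).eventually_lt_const h).filter_mono nhdsWithin_le_nhds
  constructor <;> intro h1 <;>
    filter_upwards [h1, hev, mem_nb hxc hmono hanti hmap hcont] with x h1 h2 h3 <;>
    rw [iterate_succ_apply', iterate_succ_apply']
  · exact hmono ⟨(hmap.iterate n h3).1, h2.le⟩ ⟨hIcc.1, h.le⟩ h1
  · exact hmono ⟨hIcc.1, h.le⟩ ⟨(hmap.iterate n h3).1, h2.le⟩ h1

lemma step_gt {n : ℕ} (h : x_c < f^[n] x_c) :
    (SP f x_c n → SQ f x_c (n+1)) ∧ (SQ f x_c n → SP f x_c (n+1)) := by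
  have hIcc : f^[n] x_c ∈ Icc a b := hmap.iterate n (Ioo_subset_Icc_self hxc)
  have hev : ∀ᶠ x in 𝓝[≠] x_c, x_c < f^[n] x :=
    (((hcont.iterate n).continuousAt).eventually_const_lt h).filter_mono nhdsWithin_le_nhds
  constructor <;> intro h1 <;>
    filter_upwards [h1, hev, mem_nb hxc hmono hanti hmap hcont] with x h1 h2 h3 <;>
    rw [iterate_succ_apply', iterate_succ_apply']
  · exact hanti ⟨h2.le, (hmap.iterate n h3).2⟩ ⟨h.le, hIcc.2⟩ h1
  · exact hanti ⟨h.le, hIcc.2⟩ ⟨h2.le, (hmap.iterate n h3).2⟩ h1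

lemma step_eq {n : ℕ} (h : f^[n] x_c = x_c) (htot : SP f x_c n ∨ SQ f x_c n) :
    SP f x_c (n+1) := by
  rcases htot with h1 | h1
  · filter_upwards [h1, mem_nb hxc hmono hanti hmap hcont] with x h1 h2
    rw [iterate_succ_apply', iterate_succ_apply', h]
    have hlt : f^[n] x < x_c := h1.trans_eq h
    exact hmono ⟨(hmap.iterate n h2).1, hlt.le⟩ ⟨hxc.1.le, le_rfl⟩ hlt
  · filter_upwards [h1, mem_nb hxc hmono hanti hmap hcont] with x h1 h2
    rw [iterate_succ_apply', iterate_succ_apply', h]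
    have hlt : x_c < f^[n] x := h.symm.trans_lt h1
    exact hanti ⟨le_rfl, hxc.2.le⟩ ⟨hlt.le, (hmap.iterate n h2).2⟩ hlt

lemma total : ∀ n : ℕ, 1 ≤ n → SP f x_c n ∨ SQ f x_c n := by
  intro n hn
  induction n, hn using Nat.le_induction with
  | base => exact Or.inl (base hxc hmono hanti hmap hcont)
  | succ n hn ih =>
    rcases lt_trichotomy (f^[n] x_c) x_c with h | h | h
    · rcases ih with h1 | h1
      · exact Or.inl ((step_lt hxc hmono hanti hmap hcont h).1 h1)
      · exact Or.inr ((step_lt hxc hmono hanti hmap hcont h).2 h1)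
    · exact Or.inl (step_eq hxc hmono hanti hmap hcont h ih)
    · rcases ih with h1 | h1
      · exact Or.inr ((step_gt hxc hmono hanti hmap hcont h).1 h1)
      · exact Or.inl ((step_gt hxc hmono hanti hmap hcont h).2 h1)

lemma determ {n : ℕ} (hn : 1 ≤ n) :
    (f^[n] x_c = x_c → SP f x_c (n+1)) ∧
    (f^[n] x_c < x_c → (SP f x_c (n+1) ↔ SP f x_c n)) ∧
    (x_c < f^[n] x_c → (SP f x_c (n+1) ↔ ¬ SP f x_c n)) := by
  have htot := total hxc hmono hanti hmap hcont n hn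
  refine ⟨fun h => step_eq hxc hmono hanti hmap hcont h htot,
    fun h => ⟨?_, (step_lt hxc hmono hanti hmap hcont h).1⟩, fun h => ⟨?_, ?_⟩⟩
  · intro h1
    rcases htot with h2 | h2
    · exact h2
    · exact absurd ⟨h1, (step_lt hxc hmono hanti hmap hcont h).2 h2⟩ not_SP_and_SQ
  · intro h1 h2
    exact absurd ⟨h1, (step_gt hxc hmono hanti hmap hcont h).1 h2⟩ not_SP_and_SQ
  · intro h1
    rcases htot with h2 | h2
    · exact absurd h2 h1
    · exact (step_gt hxc hmono hanti hmap hcont h).2 h2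

lemma isLocalMax_iff_SP {n : ℕ} (hn : 1 ≤ n) :
    IsLocalMax (f^[n]) x_c ↔ SP f x_c n := by
  constructor
  · intro h
    rcases total hxc hmono hanti hmap hcont n hn with h1 | h1
    · exact h1
    · exfalso
      obtain ⟨x, hx1, hx2⟩ := ((h.filter_mono nhdsWithin_le_nhds).and h1).exists
      exact absurd hx2 (not_lt.2 hx1)
  · intro h
    have he : 𝓝 x_c = 𝓝[≠] x_c ⊔ pure x_c := (nhdsNE_sup_pure x_c).symm
    rw [IsLocalMax, IsMaxFilter, he, eventually_sup]
    exact ⟨h.mono fun x hx => hx.le, by simp⟩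

end core
end MinMaxAux
open Set Topology Filter Function MinMaxAux

theorem minmax_sequence_periodic
    (a b x_c : ℝ) (f : ℝ → ℝ) (hab : a < b)
    (hmap : Set.MapsTo f (Set.Icc a b) (Set.Icc a b))
    (hf : ContDiff ℝ 2 f)
    (hxc : x_c ∈ Set.Ioo a b)
    (h2 : deriv (deriv f) x_c < 0)
    (hup : ∀ x ∈ Set.Ico a x_c, 0 < deriv f x)
    (hdn : ∀ x ∈ Set.Ioc x_c b, deriv f x < 0)
    (k : ℕ) (hk : 1 ≤ k)
    (hγ : ∀ n : ℕ, 1 ≤ n →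
      Real.sign (f^[n + k] x_c - x_c) = Real.sign (f^[n] x_c - x_c)) :
    ((∀ n : ℕ, 1 ≤ n →
        ((IsLocalMax (f^[n + k]) x_c ↔ IsLocalMax (f^[n]) x_c) ∧
         Real.sign (f^[n + k] x_c - x_c) = Real.sign (f^[n] x_c - x_c))) ∨
     (IsLocalMax (f^[2 * k + 1]) x_c ∧ f^[2 * k + 1] x_c > x_c ∧
      ∀ n : ℕ, 1 ≤ n →
        ((IsLocalMax (f^[n + 2 * k]) x_c ↔ IsLocalMax (f^[n]) x_c) ∧
         Real.sign (f^[n + 2 * k] x_c - x_c) = Real.sign (f^[n] x_c - x_c)))) ∧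
    ((IsLocalMax (f^[k + 1]) x_c ∧ f^[k + 1] x_c > x_c) →
      ∀ n : ℕ, 1 ≤ n →
        ((IsLocalMax (f^[n + k]) x_c ↔ IsLocalMax (f^[n]) x_c) ∧
         Real.sign (f^[n + k] x_c - x_c) = Real.sign (f^[n] x_c - x_c))) := by
  have hcont : Continuous f := hf.continuous
  have hmono : StrictMonoOn f (Icc a x_c) := by
    apply strictMonoOn_of_deriv_pos (convex_Icc a x_c) hcont.continuousOn
    intro x hx
    rw [interior_Icc] at hx
    exact hup x ⟨hx.1.le, hx.2⟩
  have hanti : StrictAntiOn f (Icc x_c b) := by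
    apply strictAntiOn_of_deriv_neg (convex_Icc x_c b) hcont.continuousOn
    intro x hx
    rw [interior_Icc] at hx
    exact hdn x ⟨hx.1, hx.2.le⟩
  -- abbreviations
  have D := fun {n : ℕ} (hn : 1 ≤ n) => determ hxc hmono hanti hmap hcont (n := n) hn
  have Lmax := fun {n : ℕ} (hn : 1 ≤ n) =>
    isLocalMax_iff_SP hxc hmono hanti hmap hcont (n := n) hn
  have hbase : SP f x_c 1 := base hxc hmono hanti hmap hcont
  -- sign trichotomy transfer
  have hs : ∀ n : ℕ, 1 ≤ n →
      (f^[n + k] x_c < x_c ↔ f^[n] x_c < x_c) ∧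
      (f^[n + k] x_c = x_c ↔ f^[n] x_c = x_c) ∧
      (x_c < f^[n + k] x_c ↔ x_c < f^[n] x_c) := by
    intro n hn
    have h := sign_trichotomy (hγ n hn)
    simpa [sub_neg, sub_eq_zero, sub_pos] using h
  -- case A: SP (k+1) implies k-periodicity of SP
  have keyA : SP f x_c (k + 1) → ∀ n : ℕ, 1 ≤ n → (SP f x_c (n + k) ↔ SP f x_c n) := by
    intro hA n hn
    induction n, hn using Nat.le_induction with
    | base =>
      rw [Nat.add_comm]
      exact iff_of_true hA hbase
    | succ n hn ih =>
      obtain ⟨hz, hlt, hgt⟩ := D hn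
      obtain ⟨hz', hlt', hgt'⟩ := D (show 1 ≤ n + k by omega)
      have e : n + 1 + k = n + k + 1 := by omega
      rw [e]
      rcases lt_trichotomy (f^[n] x_c) x_c with h | h | h
      · rw [hlt' ((hs n hn).1.mpr h), hlt h]; exact ih
      · exact iff_of_true (hz' ((hs n hn).2.1.mpr h)) (hz h)
      · rw [hgt' ((hs n hn).2.2.mpr h), hgt h]; exact not_congr ih
  -- case B: ¬SP (k+1) implies k-antiperiodicity of SP
  have keyB : ¬ SP f x_c (k + 1) →
      ∀ n : ℕ, 1 ≤ n → (SP f x_c (n + k) ↔ ¬ SP f x_c n) := by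
    intro hB
    have hnz : ∀ n : ℕ, 1 ≤ n → f^[n] x_c ≠ x_c := by
      intro n hn heq
      have h2' : f^[n + k] x_c = x_c := (hs n hn).2.1.mpr heq
      have h3 : f^[k] x_c = x_c := by
        have h4 : f^[n + k] x_c = f^[k] (f^[n] x_c) := by
          rw [Nat.add_comm, Function.iterate_add_apply]
        rw [heq] at h4
        rw [← h4, h2']
      exact hB ((D hk).1 h3)
    intro n hn
    induction n, hn using Nat.le_induction with
    | base =>
      rw [Nat.add_comm]
      exact iff_of_false hB (not_not_intro hbase)
    | succ n hn ih =>
      obtain ⟨hz, hlt, hgt⟩ := D hn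
      obtain ⟨hz', hlt', hgt'⟩ := D (show 1 ≤ n + k by omega)
      have e : n + 1 + k = n + k + 1 := by omega
      rw [e]
      rcases lt_trichotomy (f^[n] x_c) x_c with h | h | h
      · rw [hlt' ((hs n hn).1.mpr h), hlt h]; exact ih
      · exact absurd h (hnz n hn)
      · rw [hgt' ((hs n hn).2.2.mpr h), hgt h]; exact not_congr ih
  constructor
  · by_cases hA : SP f x_c (k + 1)
    · left
      intro n hn
      refine ⟨?_, hγ n hn⟩
      rw [Lmax (show 1 ≤ n + k by omega), Lmax hn]
      exact keyA hA n hn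
    · right
      have hanti' := keyB hA
      have hnz1 : f x_c ≠ x_c := by
        have := fun heq => hA ((D hk).1 (by
          have h2' : f^[1 + k] x_c = x_c := (hs 1 le_rfl).2.1.mpr (by simpa using heq)
          have h4 : f^[1 + k] x_c = f^[k] (f^[1] x_c) := by
            rw [Nat.add_comm, Function.iterate_add_apply]
          simp only [iterate_one] at h4
          rw [heq] at h4
          rw [← h4, h2']))
        intro heq; exact this heq
      have hfgt : x_c < f x_c := by
        rcases lt_trichotomy (f x_c) x_c with h | h | h
        · -- f x_c < x_c forces SP at every level, contradiction with ¬SP(k+1)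
          exfalso
          have hallle : ∀ y ∈ Icc a b, f y ≤ f x_c := by
            intro y hy
            rcases le_total y x_c with h' | h'
            · exact hmono.monotoneOn ⟨hy.1, h'⟩ ⟨hxc.1.le, le_rfl⟩ h'
            · exact hanti.antitoneOn ⟨le_rfl, hxc.2.le⟩ ⟨h', hy.2⟩ h'
          have hneg : ∀ n : ℕ, 1 ≤ n → f^[n] x_c < x_c := by
            intro n hn
            induction n, hn using Nat.le_induction with
            | base => simpa using h
            | succ n hn ih =>
              rw [iterate_succ_apply']
              have : f (f^[n] x_c) ≤ f x_c :=
                hallle _ (hmap.iterate n (Ioo_subset_Icc_self hxc))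
              exact this.trans_lt h
          have hSPall : ∀ n : ℕ, 1 ≤ n → SP f x_c n := by
            intro n hn
            induction n, hn using Nat.le_induction with
            | base => exact hbase
            | succ n hn ih =>
              exact (step_lt hxc hmono hanti hmap hcont (hneg n hn)).1 ih
          exact hA (hSPall (k + 1) (by omega))
        · exact absurd h hnz1
        · exact h
      have hSP2k : SP f x_c (2 * k + 1) := by
        have := (hanti' (k + 1) (by omega)).mpr hA
        have e : k + 1 + k = 2 * k + 1 := by omega
        rwa [e] at this
      refine ⟨(Lmax (show 1 ≤ 2 * k + 1 by omega)).mpr hSP2k, ?_, ?_⟩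
      · -- x_c < f^[2k+1] x_c
        have h1 : x_c < f^[1 + k] x_c := (hs 1 le_rfl).2.2.mpr (by simpa using hfgt)
        have h2' : x_c < f^[1 + k + k] x_c := (hs (1 + k) (by omega)).2.2.mpr h1
        have e : 1 + k + k = 2 * k + 1 := by omega
        rwa [e] at h2'
      · intro n hn
        constructor
        · rw [Lmax (show 1 ≤ n + 2 * k by omega), Lmax hn]
          have e : n + 2 * k = n + k + k := by omega
          rw [e]
          rw [hanti' (n + k) (by omega), hanti' n hn]
          exact not_not
        · have e : n + 2 * k = n + k + k := by omega
          rw [e, hγ (n + k) (by omega), hγ n hn]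
  · rintro ⟨hmax, -⟩ n hn
    have hA : SP f x_c (k + 1) := (Lmax (show 1 ≤ k + 1 by omega)).mp hmax
    refine ⟨?_, hγ n hn⟩
    rw [Lmax (show 1 ≤ n + k by omega), Lmax hn]
    exact keyA hA n hn
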